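/- Define Δ(u) := log(−log u) for u ∈ (0,1) and κ_k(a,b) := (1/(b−a)) ∫_a^b Δ(u)^k du. Suppose 0 ≤ a₂ ≤ a₁ < b̄₂ ≤ b̄₁ ≤ 1 (writing v̄ := 1 − v). Set ζ(a₁, b̄₂) := κ₁(a₁, b̄₁)² − 2·κ₁(a₁, b̄₁)·κ₁(a₂, b̄₂) + κ₂(a₂, b̄₂), ζ(a₂, b̄₂) := κ₂(a₂, b̄₂) − κ₁(a₂, b̄₂)², and ζ_r := ζ(a₂, b̄₂)/ζ(a₁, b̄₂). For any real β and σ > 0, define T₁ := log σ − β·κ₁(a₁, b̄₁) and T₂ := (log σ)² − 2β·(log σ)·κ₁(a₂, b̄₂) + β²·κ₂(a₂, b̄₂). Then T₂ − ζ_r·T₁² ≥ 0. -/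

import Mathlib

open MeasureTheory Set

/-- `Δ(u) = log(-log u)`. -/
noncomputable def DeltaF (u : ℝ) : ℝ := Real.log (-Real.log u)

/-- `κ_k(a,b) = (1/(b-a)) ∫_a^b Δ(u)^k du`. -/
noncomputable def kappaF (k : ℕ) (a b : ℝ) : ℝ :=
  (b - a)⁻¹ * ∫ u in a..b, (DeltaF u) ^ k

lemma measurable_deltaF : Measurable DeltaF :=
  Real.measurable_log.comp Real.measurable_log.neg

lemma abs_deltaF_le {u : ℝ} (h0 : 0 < u) (h1 : u < 1) :
    |DeltaF u| ≤ 4 * u ^ (-(4:ℝ)⁻¹) + 4 * (1 - u) ^ (-(4:ℝ)⁻¹) := by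
  have hlu : Real.log u < 0 := Real.log_neg h0 h1
  have hnl : 0 < -Real.log u := by linarith
  have h1u : 0 < 1 - u := by linarith
  have key : ∀ x : ℝ, 0 < x → Real.log x⁻¹ ≤ 4 * x ^ (-(4:ℝ)⁻¹) := by
    intro x hx
    have := Real.log_le_rpow_div (x := x⁻¹) (ε := (4:ℝ)⁻¹) (by positivity) (by norm_num)
    calc Real.log x⁻¹ ≤ (x⁻¹) ^ ((4:ℝ)⁻¹) / (4:ℝ)⁻¹ := this
      _ = 4 * x ^ (-(4:ℝ)⁻¹) := by
          rw [Real.inv_rpow hx.le, ← Real.rpow_neg hx.le]; field_simp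
  have hub : DeltaF u ≤ 4 * u ^ (-(4:ℝ)⁻¹) := by
    have h2 : DeltaF u ≤ -Real.log u := by
      have := Real.log_le_sub_one_of_pos hnl
      unfold DeltaF; linarith
    have h3 : -Real.log u = Real.log u⁻¹ := (Real.log_inv u).symm
    calc DeltaF u ≤ Real.log u⁻¹ := by linarith [h3 ▸ h2]
      _ ≤ 4 * u ^ (-(4:ℝ)⁻¹) := key u h0
  have hlb : -DeltaF u ≤ 4 * (1 - u) ^ (-(4:ℝ)⁻¹) := by
    have h2 : 1 - u ≤ -Real.log u := by
      have := Real.log_le_sub_one_of_pos h0; linarith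
    have h3 : Real.log (1 - u) ≤ DeltaF u := Real.log_le_log h1u h2
    have h4 : -Real.log (1 - u) = Real.log (1 - u)⁻¹ := (Real.log_inv _).symm
    calc -DeltaF u ≤ -Real.log (1 - u) := by linarith
      _ = Real.log (1 - u)⁻¹ := h4
      _ ≤ 4 * (1 - u) ^ (-(4:ℝ)⁻¹) := key _ h1u
  have p1 : (0:ℝ) ≤ 4 * u ^ (-(4:ℝ)⁻¹) := by positivity
  have p2 : (0:ℝ) ≤ 4 * (1 - u) ^ (-(4:ℝ)⁻¹) := by positivity
  rw [abs_le]; constructor <;> linarith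

lemma deltaF_pow_integrableOn {k : ℕ} (hk : k = 1 ∨ k = 2) {a b : ℝ} (ha : 0 ≤ a)
    (hb : b ≤ 1) : IntegrableOn (fun u => DeltaF u ^ k) (Ioc a b) := by
  set g : ℝ → ℝ := fun u => 32 * (u ^ (-(2:ℝ)⁻¹) + (1 - u) ^ (-(2:ℝ)⁻¹)) with hg
  have hg1 : IntervalIntegrable (fun x : ℝ => x ^ (-(2:ℝ)⁻¹)) volume 0 1 :=
    intervalIntegral.intervalIntegrable_rpow' (by norm_num)
  have hg2 : IntervalIntegrable (fun x : ℝ => (1 - x) ^ (-(2:ℝ)⁻¹)) volume 0 1 := by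
    have := (intervalIntegral.intervalIntegrable_rpow' (a := 0) (b := 1)
      (r := -(2:ℝ)⁻¹) (by norm_num)).comp_sub_left 1
    simpa using this.symm
  have hgInt : IntegrableOn g (Ioc 0 1) := by
    have := ((hg1.add hg2).const_mul 32)
    rwa [intervalIntegrable_iff_integrableOn_Ioc_of_le (by norm_num)] at this
  have hgInt' : IntegrableOn g (Ioc a b) := hgInt.mono_set (Ioc_subset_Ioc ha hb)
  refine Integrable.mono hgInt' ((measurable_deltaF.pow_const k).aestronglyMeasurable) ?_
  have hne : ∀ᵐ u : ℝ ∂(volume.restrict (Ioc a b)), u ≠ 1 := by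
    refine ae_restrict_of_ae ?_
    rw [ae_iff]
    convert Real.volume_singleton (a := 1) using 2
    ext x; simp
  filter_upwards [ae_restrict_mem measurableSet_Ioc, hne] with u hu hu1
  have h0 : 0 < u := lt_of_le_of_lt ha hu.1
  have h1 : u < 1 := lt_of_le_of_ne (le_trans hu.2 hb) hu1
  have h1u : 0 < 1 - u := by linarith
  have habs := abs_deltaF_le h0 h1
  set A := u ^ (-(4:ℝ)⁻¹) with hA
  set B := (1 - u) ^ (-(4:ℝ)⁻¹) with hB
  have hA0 : 0 ≤ A := Real.rpow_nonneg h0.le _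
  have hB0 : 0 ≤ B := Real.rpow_nonneg h1u.le _
  have hA2 : A ^ 2 = u ^ (-(2:ℝ)⁻¹) := by
    rw [hA, ← Real.rpow_natCast (u ^ _) 2, ← Real.rpow_mul h0.le]; norm_num
  have hB2 : B ^ 2 = (1 - u) ^ (-(2:ℝ)⁻¹) := by
    rw [hB, ← Real.rpow_natCast ((1-u) ^ _) 2, ← Real.rpow_mul h1u.le]; norm_num
  have hAle : A ≤ u ^ (-(2:ℝ)⁻¹) :=
    Real.rpow_le_rpow_of_exponent_ge h0 h1.le (by norm_num)
  have hBle : B ≤ (1 - u) ^ (-(2:ℝ)⁻¹) :=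
    Real.rpow_le_rpow_of_exponent_ge h1u (by linarith) (by norm_num)
  have hgnn : 0 ≤ g u := by
    rw [hg]; positivity
  rw [Real.norm_eq_abs, Real.norm_eq_abs, abs_of_nonneg hgnn, abs_pow]
  show |DeltaF u| ^ k ≤ 32 * (u ^ (-(2:ℝ)⁻¹) + (1 - u) ^ (-(2:ℝ)⁻¹))
  rw [← hA2, ← hB2]
  rcases hk with rfl | rfl
  · rw [pow_one]; nlinarith [sq_nonneg (A - 1), sq_nonneg (B - 1)]
  · nlinarith [sq_nonneg (A - B), abs_nonneg (DeltaF u)]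

lemma kappaF_sq_le {a b : ℝ} (ha : 0 ≤ a) (hab : a < b) (hb : b ≤ 1) :
    (kappaF 1 a b) ^ 2 ≤ kappaF 2 a b := by
  have hI1 : IntegrableOn (fun u => DeltaF u ^ 1) (Ioc a b) :=
    deltaF_pow_integrableOn (Or.inl rfl) ha hb
  have hI2 : IntegrableOn (fun u => DeltaF u ^ 2) (Ioc a b) :=
    deltaF_pow_integrableOn (Or.inr rfl) ha hb
  have hd : 0 < b - a := by linarith
  have hμ : (volume (Ioc a b)).toReal = b - a := by
    rw [Real.volume_Ioc, ENNReal.toReal_ofReal hd.le]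
  set I1 := ∫ u in Ioc a b, DeltaF u ^ 1 with hI1d
  set I2 := ∫ u in Ioc a b, DeltaF u ^ 2 with hI2d
  have hk1 : kappaF 1 a b = (b - a)⁻¹ * I1 := by
    rw [kappaF, intervalIntegral.integral_of_le hab.le]
  have hk2 : kappaF 2 a b = (b - a)⁻¹ * I2 := by
    rw [kappaF, intervalIntegral.integral_of_le hab.le]
  set m : ℝ := (b - a)⁻¹ * I1 with hm
  have key : 0 ≤ ∫ u in Ioc a b, (DeltaF u - m) ^ 2 :=
    setIntegral_nonneg measurableSet_Ioc (fun u _ => sq_nonneg _)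
  have hconst : IntegrableOn (fun _ : ℝ => m ^ 2) (Ioc a b) :=
    integrableOn_const (by rw [Real.volume_Ioc]; exact ENNReal.ofReal_ne_top)
  have hsub : IntegrableOn (fun u => DeltaF u ^ 2 - 2 * m * DeltaF u ^ 1) (Ioc a b) :=
    hI2.sub (hI1.const_mul (2 * m))
  have hexp : (∫ u in Ioc a b, (DeltaF u - m) ^ 2)
      = I2 - 2 * m * I1 + m ^ 2 * (b - a) := by
    have heq : ∀ u : ℝ, (DeltaF u - m) ^ 2
        = (DeltaF u ^ 2 - (2 * m) * DeltaF u ^ 1) + m ^ 2 := by intro u; ring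
    simp_rw [heq]
    rw [integral_add hsub hconst,
      integral_sub hI2 (hI1.const_mul (2 * m)), MeasureTheory.integral_const_mul, integral_const, measureReal_restrict_apply_univ, measureReal_def, hμ]
    simp only [smul_eq_mul, ← hI1d, ← hI2d]; ring
  have hdd : (b - a) * (b - a)⁻¹ = 1 := mul_inv_cancel₀ hd.ne'
  rw [hk1, hk2]
  have key2 : 0 ≤ I2 - 2 * m * I1 + m ^ 2 * (b - a) := hexp ▸ key
  have h3 : 0 ≤ (b - a)⁻¹ * (I2 - 2 * m * I1 + m ^ 2 * (b - a)) :=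
    mul_nonneg (inv_nonneg.2 hd.le) key2
  have h5 : (b - a)⁻¹ * (I2 - 2 * m * I1 + m ^ 2 * (b - a))
      = (b - a)⁻¹ * I2 - m ^ 2 := by
    have hr : (b - a)⁻¹ * (I2 - 2 * m * I1 + m ^ 2 * (b - a))
        = (b - a)⁻¹ * I2 - 2 * m * ((b - a)⁻¹ * I1) + m ^ 2 * ((b - a) * (b - a)⁻¹) := by
      ring
    rw [hr, ← hm, hdd]; ring
  rw [h5] at h3
  linarith

/-- For the Fréchet population trimmed log-moments
`T₁ = log σ - β·κ₁(a₁,b̄₁)` and `T₂ = (log σ)² - 2β·(log σ)·κ₁(a₂,b̄₂) + β²·κ₂(a₂,b̄₂)`,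
one has `T₂ - ζ_r·T₁² ≥ 0` for any real `β` and `σ > 0`, with
`ζ_r = ζ(a₂,b̄₂)/ζ(a₁,b̄₂)` and `0 ≤ a₂ ≤ a₁ < b̄₂ ≤ b̄₁ ≤ 1`. -/
theorem frechet_T2_sub_zetaR_T1_sq_nonneg (a1 a2 b1 b2 : ℝ)
    (h0 : 0 ≤ a2) (h1 : a2 ≤ a1) (h2 : a1 < 1 - b2) (h3 : 1 - b2 ≤ 1 - b1)
    (h4 : 1 - b1 ≤ 1)
    (ζ12 ζ22 ζr : ℝ)
    (hζ12 : ζ12 = (kappaF 1 a1 (1 - b1)) ^ 2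
        - 2 * kappaF 1 a1 (1 - b1) * kappaF 1 a2 (1 - b2)
        + kappaF 2 a2 (1 - b2))
    (hζ22 : ζ22 = kappaF 2 a2 (1 - b2) - (kappaF 1 a2 (1 - b2)) ^ 2)
    (hζr : ζr = ζ22 / ζ12)
    (β σ : ℝ) (hσ : 0 < σ) (T1 T2 : ℝ)
    (hT1 : T1 = Real.log σ - β * kappaF 1 a1 (1 - b1))
    (hT2 : T2 = (Real.log σ) ^ 2 - 2 * β * Real.log σ * kappaF 1 a2 (1 - b2)
        + β ^ 2 * kappaF 2 a2 (1 - b2)) :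
    0 ≤ T2 - ζr * T1 ^ 2 := by
  set K := kappaF 1 a1 (1 - b1) with hK
  set m1 := kappaF 1 a2 (1 - b2) with hm1
  set m2 := kappaF 2 a2 (1 - b2) with hm2
  set L := Real.log σ with hL
  have hvar : m1 ^ 2 ≤ m2 :=
    kappaF_sq_le h0 (lt_of_le_of_lt h1 h2) (le_trans h3 h4)
  have hz12nn : 0 ≤ ζ12 := by
    rw [hζ12]; nlinarith [sq_nonneg (K - m1)]
  by_cases hz : ζ12 = 0
  · rw [hζr, hz, div_zero, zero_mul, sub_zero, hT2]
    nlinarith [sq_nonneg (L - β * m1), mul_nonneg (sq_nonneg β) (sub_nonneg.2 hvar)]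
  · have hzpos : 0 < ζ12 := lt_of_le_of_ne hz12nn (Ne.symm hz)
    rw [sub_nonneg, hζr, div_mul_eq_mul_div, div_le_iff₀ hzpos, hζ22, hζ12, hT1, hT2]
    nlinarith [sq_nonneg ((m1 - K) * (L - β * m1) - β * (m2 - m1 ^ 2))]
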